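/- Let ℓ ≥ 2 and τ : ℝ/ℤ → ℝ Lipschitz with ∫ τ = 0. Then the set J'_τ = { λ ∈ (0,1] : there exists a continuous μ with μ∘m_ℓ - λμ = τ } is a closed subset of (0,1]. -/

import Mathlib

open MeasureTheory

private lemma ua_surj' : Function.Surjective ((↑) : ℝ → UnitAddCircle) :=
  QuotientAddGroup.mk'_surjective _

private lemma ua_dist_le' (u v : ℝ) :
    dist ((u : ℝ) : UnitAddCircle) ((v : ℝ) : UnitAddCircle) ≤ |u - v| := by
  rw [dist_eq_norm, ← AddCircle.coe_sub]
  simpa [Real.norm_eq_abs] using QuotientAddGroup.norm_mk_le_norm (S := AddSubgroup.zmultiples (1:ℝ)) (m := u - v)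

private lemma exists_preimage' (ℓ : ℕ) (hℓ : 2 ≤ ℓ) (x y : UnitAddCircle) :
    ∃ x' y' : UnitAddCircle, (ℓ : ℤ) • x' = x ∧ (ℓ : ℤ) • y' = y ∧
      dist x' y' ≤ dist x y / ℓ := by
  obtain ⟨a, rfl⟩ := ua_surj' x
  obtain ⟨r, hr⟩ : ∃ r : ℝ, (r : UnitAddCircle) = (a : UnitAddCircle) - y := ua_surj' _
  set d : ℝ := r - round r with hd
  have hdr : ((d : ℝ) : UnitAddCircle) = (a : UnitAddCircle) - y := by
    rw [hd, ← hr, AddCircle.coe_sub]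
    have : ((round r : ℝ) : UnitAddCircle) = 0 := by
      rw [AddCircle.coe_eq_zero_iff]; exact ⟨round r, by simp⟩
    rw [this, sub_zero]
  have hdy : ((a - d : ℝ) : UnitAddCircle) = y := by
    rw [AddCircle.coe_sub, hdr]; abel
  have hℓ0 : (ℓ : ℝ) ≠ 0 := by positivity
  refine ⟨((a / ℓ : ℝ) : UnitAddCircle), (((a - d) / ℓ : ℝ) : UnitAddCircle), ?_, ?_, ?_⟩
  · rw [← AddCircle.coe_zsmul]
    norm_num [mul_div_cancel₀ _ hℓ0]
  · rw [← AddCircle.coe_zsmul]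
    norm_num [mul_div_cancel₀ _ hℓ0, hdy]
  · have h2 : dist ((a : ℝ) : UnitAddCircle) y = |d| := by
      rw [← hdy, dist_eq_norm, ← AddCircle.coe_sub]
      have h3 : a - (a - d) = d := by ring
      rw [h3, AddCircle.norm_eq (p := 1)]
      simp only [inv_one, one_mul, mul_one, hd]
      rw [round_sub_intCast r (round r)]
      simp
    rw [h2]
    refine (ua_dist_le' _ _).trans ?_
    rw [div_sub_div_same]
    have h4 : a - (a - d) = d := by ring
    rw [h4, abs_div, abs_of_nonneg (by positivity : (0:ℝ) ≤ (ℓ:ℝ))]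

private lemma sol_lipschitz' (ℓ : ℕ) (hℓ : 2 ≤ ℓ) (τ μ : UnitAddCircle → ℝ) (L : NNReal)
    (hτ : LipschitzWith L τ) (p : ℝ) (hp0 : 0 < p) (hp1 : p ≤ 1)
    (hμ : Continuous μ) (heq : ∀ θ, μ ((ℓ : ℤ) • θ) - p * μ θ = τ θ) :
    LipschitzWith L μ := by
  have hℓR : (1:ℝ) < ℓ := by exact_mod_cast Nat.lt_of_lt_of_le one_lt_two hℓ
  have hℓpos : (0:ℝ) < ℓ := by linarith
  rw [lipschitzWith_iff_dist_le_mul]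
  intro x y
  have P : ∀ q : UnitAddCircle × UnitAddCircle, ∃ q' : UnitAddCircle × UnitAddCircle,
      (ℓ : ℤ) • q'.1 = q.1 ∧ (ℓ : ℤ) • q'.2 = q.2 ∧ dist q'.1 q'.2 ≤ dist q.1 q.2 / ℓ := by
    intro q
    obtain ⟨a, b, h1, h2, h3⟩ := exists_preimage' ℓ hℓ q.1 q.2
    exact ⟨(a, b), h1, h2, h3⟩
  choose F hF1 hF2 hF3 using P
  set s : ℕ → UnitAddCircle × UnitAddCircle := fun n => F^[n] (x, y) with hs
  have hs0 : s 0 = (x, y) := rfl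
  have hsS : ∀ n, s (n + 1) = F (s n) := fun n => Function.iterate_succ_apply' F n (x, y)
  have hdist : ∀ n, dist (s n).1 (s n).2 ≤ dist x y / ℓ ^ n := by
    intro n
    induction n with
    | zero => simp [hs0]
    | succ n ih =>
      rw [hsS]
      refine (hF3 (s n)).trans ?_
      rw [pow_succ, ← div_div]
      gcongr
  have hmain : ∀ n, |μ x - μ y| ≤ |μ (s n).1 - μ (s n).2| + L * dist x y * (1 - ((ℓ:ℝ)⁻¹) ^ n) := by
    intro n
    induction n with
    | zero => simp [hs0]
    | succ n ih =>
      have key : |μ (s n).1 - μ (s n).2| ≤ |μ (s (n+1)).1 - μ (s (n+1)).2|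
          + L * (dist x y / ℓ ^ (n+1)) := by
        have e1 : μ (s n).1 = p * μ (s (n+1)).1 + τ (s (n+1)).1 := by
          have := heq (s (n+1)).1
          rw [hsS, hF1] at this
          rw [hsS]; linarith [heq (F (s n)).1]
        have e2 : μ (s n).2 = p * μ (s (n+1)).2 + τ (s (n+1)).2 := by
          have := heq (s (n+1)).2
          rw [hsS, hF2] at this
          rw [hsS]; linarith [heq (F (s n)).2]
        have hτd : |τ (s (n+1)).1 - τ (s (n+1)).2| ≤ L * (dist x y / ℓ ^ (n+1)) := by
          have := hτ.dist_le_mul (s (n+1)).1 (s (n+1)).2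
          rw [Real.dist_eq] at this
          refine this.trans ?_
          have : dist (s (n+1)).1 (s (n+1)).2 ≤ dist x y / ℓ ^ (n+1) := hdist (n+1)
          exact mul_le_mul_of_nonneg_left this (NNReal.coe_nonneg L)
        calc |μ (s n).1 - μ (s n).2|
            = |p * (μ (s (n+1)).1 - μ (s (n+1)).2) + (τ (s (n+1)).1 - τ (s (n+1)).2)| := by
              rw [e1, e2]; ring_nf
          _ ≤ |p * (μ (s (n+1)).1 - μ (s (n+1)).2)| + |τ (s (n+1)).1 - τ (s (n+1)).2| :=
              abs_add_le _ _
          _ ≤ |μ (s (n+1)).1 - μ (s (n+1)).2| + L * (dist x y / ℓ ^ (n+1)) := by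
              refine add_le_add ?_ hτd
              rw [abs_mul, abs_of_pos hp0]
              nlinarith [abs_nonneg (μ (s (n+1)).1 - μ (s (n+1)).2)]
      refine (ih.trans (by linarith : _ ≤ |μ (s (n+1)).1 - μ (s (n+1)).2|
          + L * (dist x y / ℓ ^ (n+1)) + L * dist x y * (1 - ((ℓ:ℝ)⁻¹) ^ n))).trans ?_
      have hL0 : (0:ℝ) ≤ L := NNReal.coe_nonneg L
      have hd0 : (0:ℝ) ≤ dist x y := dist_nonneg
      have harith : (dist x y / ℓ ^ (n+1)) + dist x y * (1 - ((ℓ:ℝ)⁻¹) ^ n)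
          ≤ dist x y * (1 - ((ℓ:ℝ)⁻¹) ^ (n+1)) := by
        have h2ℓ : (2:ℝ) ≤ ℓ := by exact_mod_cast hℓ
        have hpow : (0:ℝ) < (ℓ:ℝ) ^ (n+1) := by positivity
        rw [div_eq_mul_inv, ← inv_pow]
        have : ((ℓ:ℝ)⁻¹) ^ n ≥ 2 * ((ℓ:ℝ)⁻¹) ^ (n+1) := by
          have hinv : ((ℓ:ℝ)⁻¹) ≤ 1/2 := by
            rw [inv_le_comm₀ hℓpos (by norm_num)]
            norm_num; exact_mod_cast hℓ
          have hnn : (0:ℝ) ≤ ((ℓ:ℝ)⁻¹) ^ n := by positivity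
          rw [pow_succ]
          nlinarith
        nlinarith [pow_nonneg (inv_nonneg.mpr hℓpos.le) n]
      nlinarith
  have hd0 : (0:ℝ) ≤ dist x y := dist_nonneg
  rw [dist_eq_norm, Real.norm_eq_abs]
  refine le_of_forall_pos_le_add ?_
  intro ε hε
  have hu : UniformContinuous μ := CompactSpace.uniformContinuous_of_continuous hμ
  rw [Metric.uniformContinuous_iff] at hu
  obtain ⟨δ, hδ, hδ'⟩ := hu ε hε
  obtain ⟨n, hn⟩ : ∃ n : ℕ, dist x y / δ < (ℓ:ℝ) ^ n := pow_unbounded_of_one_lt _ hℓR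
  have hlt : dist (s n).1 (s n).2 < δ := by
    refine (hdist n).trans_lt ?_
    rw [div_lt_iff₀ (by positivity)]
    rw [div_lt_iff₀ hδ] at hn
    nlinarith [hδ]
  have := hδ' hlt
  rw [Real.dist_eq] at this
  have h1 := hmain n
  have hL0 : (0:ℝ) ≤ L := NNReal.coe_nonneg L
  have hpow : (0:ℝ) ≤ ((ℓ:ℝ)⁻¹) ^ n := by positivity
  nlinarith [mul_nonneg (mul_nonneg hL0 hd0) hpow]

private lemma ua_cont_integrable' (μ : UnitAddCircle → ℝ) (hμ : Continuous μ) :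
    Integrable μ volume :=
  hμ.integrable_of_hasCompactSupport (HasCompactSupport.of_compactSpace _)

private lemma ua_dist_le_one' (x y : UnitAddCircle) : dist x y ≤ 1 := by
  obtain ⟨a, rfl⟩ := ua_surj' x
  obtain ⟨b, rfl⟩ := ua_surj' y
  rw [dist_eq_norm, ← AddCircle.coe_sub, AddCircle.norm_eq (p := 1)]
  simp only [inv_one, one_mul, mul_one]
  linarith [abs_sub_round (a - b)]

private lemma ua_exists_nonpos' (μ : UnitAddCircle → ℝ) (hμ : Continuous μ)
    (hzero : ∫ θ, μ θ = 0) : ∃ θ₀, μ θ₀ ≤ 0 := by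
  by_contra h
  push_neg at h
  obtain ⟨z, -, hz⟩ := isCompact_univ.exists_isMinOn Set.univ_nonempty
    (hμ.continuousOn (s := Set.univ))
  have hcz : 0 < μ z := h z
  have : ∫ (_ : UnitAddCircle), μ z ≤ ∫ θ, μ θ :=
    integral_mono (integrable_const _) (ua_cont_integrable' μ hμ) (fun θ => hz (Set.mem_univ θ))
  rw [integral_const, hzero] at this
  have hone : (volume (Set.univ : Set UnitAddCircle)).toReal = 1 := by
    rw [UnitAddCircle.measure_univ]; simp
  rw [measureReal_def, hone, one_smul] at this
  linarith

private lemma ua_abs_le' (μ : UnitAddCircle → ℝ) (L : NNReal) (hμ : Continuous μ)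
    (hlip : LipschitzWith L μ) (hzero : ∫ θ, μ θ = 0) : ∀ θ, |μ θ| ≤ L := by
  obtain ⟨θ₀, h₀⟩ := ua_exists_nonpos' μ hμ hzero
  obtain ⟨θ₁, h₁⟩ := ua_exists_nonpos' (fun θ => -μ θ) hμ.neg (by rw [integral_neg, hzero]; ring)
  intro θ
  rw [abs_le]
  constructor
  · have := hlip.dist_le_mul θ θ₁
    rw [Real.dist_eq] at this
    have h2 := (abs_le.mp (this.trans (mul_le_mul_of_nonneg_left (ua_dist_le_one' θ θ₁)
      (NNReal.coe_nonneg L)))).1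
    simp only [neg_nonpos] at h₁
    linarith
  · have := hlip.dist_le_mul θ θ₀
    rw [Real.dist_eq] at this
    have h2 := (abs_le.mp (this.trans (mul_le_mul_of_nonneg_left (ua_dist_le_one' θ θ₀)
      (NNReal.coe_nonneg L)))).2
    linarith

private lemma ua_integral_comp_smul' (ℓ : ℕ) (hℓ : 2 ≤ ℓ) (μ : UnitAddCircle → ℝ)
    (hμ : Continuous μ) :
    ∫ θ : UnitAddCircle, μ ((ℓ : ℤ) • θ) = ∫ θ, μ θ := by
  have hmp : MeasurePreserving (fun y : UnitAddCircle => (ℓ:ℤ) • y) volume volume :=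
    Measure.measurePreserving_zsmul volume (Int.natCast_ne_zero.mpr (by omega))
  calc ∫ θ : UnitAddCircle, μ ((ℓ : ℤ) • θ)
      = ∫ y, μ y ∂(Measure.map (fun y : UnitAddCircle => (ℓ:ℤ) • y) volume) :=
        (integral_map hmp.measurable.aemeasurable hμ.aestronglyMeasurable).symm
    _ = ∫ θ, μ θ := by rw [hmp.map_eq]

private lemma sol_integral_zero' (ℓ : ℕ) (hℓ : 2 ≤ ℓ) (τ μ : UnitAddCircle → ℝ)
    (hint : ∫ θ : UnitAddCircle, τ θ = 0) (p : ℝ) (hp : p ≠ 1)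
    (hμ : Continuous μ) (heq : ∀ θ, μ ((ℓ : ℤ) • θ) - p * μ θ = τ θ) :
    ∫ θ, μ θ = 0 := by
  have hcomp : Continuous fun θ : UnitAddCircle => μ ((ℓ:ℤ) • θ) :=
    hμ.comp (continuous_zsmul (ℓ:ℤ))
  have h1 : ∫ θ : UnitAddCircle, (μ ((ℓ:ℤ) • θ) - p * μ θ) = 0 := by
    simp_rw [heq]; exact hint
  rw [integral_sub (ua_cont_integrable' _ hcomp)
    ((ua_cont_integrable' μ hμ).const_mul p), integral_const_mul,
    ua_integral_comp_smul' ℓ hℓ μ hμ] at h1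
  have : (1 - p) * ∫ θ, μ θ = 0 := by linarith
  rcases mul_eq_zero.mp this with h | h
  · exact absurd (by linarith : p = 1) hp
  · exact h

theorem stmt12 (ℓ : ℕ) (hℓ : 2 ≤ ℓ) (τ : UnitAddCircle → ℝ) (L : NNReal)
    (hτ : LipschitzWith L τ) (hint : ∫ θ : UnitAddCircle, τ θ = 0) :
    IsClosed {p : Set.Ioc (0:ℝ) 1 | ∃ μ : UnitAddCircle → ℝ, Continuous μ ∧
      ∀ θ, μ ((ℓ : ℤ) • θ) - (p : ℝ) * μ θ = τ θ} := by
  apply IsSeqClosed.isClosed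
  intro ps p hmem hlim
  choose μs hcont hsol using hmem
  -- normalized solutions
  set ν : ℕ → UnitAddCircle → ℝ := fun n θ => μs n θ - ∫ θ', μs n θ' with hν
  have hνcont : ∀ n, Continuous (ν n) := fun n => (hcont n).sub continuous_const
  have hνsol : ∀ n θ, ν n ((ℓ : ℤ) • θ) - (ps n : ℝ) * ν n θ = τ θ := by
    intro n θ
    rcases eq_or_lt_of_le (ps n).2.2 with h | h
    · simp only [hν]
      have h2 := hsol n θ
      rw [h] at h2 ⊢
      linear_combination h2
    · have hz : ∫ θ', μs n θ' = 0 :=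
        sol_integral_zero' ℓ hℓ τ (μs n) hint (ps n) (ne_of_lt h) (hcont n) (hsol n)
      simp only [hν, hz, sub_zero]
      exact hsol n θ
  have hνlip : ∀ n, LipschitzWith L (ν n) := fun n =>
    sol_lipschitz' ℓ hℓ τ (ν n) L hτ (ps n) (ps n).2.1 (ps n).2.2 (hνcont n) (hνsol n)
  have hνint : ∀ n, ∫ θ, ν n θ = 0 := by
    intro n
    simp only [hν]
    rw [integral_sub (ua_cont_integrable' _ (hcont n)) (integrable_const _), integral_const]
    have hone : (volume (Set.univ : Set UnitAddCircle)).toReal = 1 := by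
      rw [UnitAddCircle.measure_univ]; simp
    rw [measureReal_def, hone, one_smul, sub_self]
  have hνbd : ∀ n θ, |ν n θ| ≤ L := fun n =>
    ua_abs_le' (ν n) L (hνcont n) (hνlip n) (hνint n)
  -- Arzelà–Ascoli
  set F : ℕ → BoundedContinuousFunction UnitAddCircle ℝ := fun n =>
    BoundedContinuousFunction.mkOfCompact ⟨ν n, hνcont n⟩ with hF
  set A : Set (BoundedContinuousFunction UnitAddCircle ℝ) := Set.range F with hA
  have in_s : ∀ (f : BoundedContinuousFunction UnitAddCircle ℝ) (x : UnitAddCircle), f ∈ A →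
      f x ∈ Set.Icc (-(L:ℝ)) (L:ℝ) := by
    rintro f x ⟨n, rfl⟩
    have := hνbd n x
    rw [abs_le] at this
    exact this
  have equi : Equicontinuous ((↑) : A → UnitAddCircle → ℝ) := by
    apply Metric.equicontinuous_of_continuity_modulus (fun d => (L:ℝ) * d)
    · have : Filter.Tendsto (fun d : ℝ => (L:ℝ) * d) (nhds 0) (nhds ((L:ℝ) * 0)) :=
        (continuous_const.mul continuous_id).tendsto 0
      simpa using this
    · rintro x y ⟨f, ⟨n, rfl⟩⟩
      exact (hνlip n).dist_le_mul x y
  have hcomp : IsCompact (closure A) :=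
    BoundedContinuousFunction.arzela_ascoli (Set.Icc (-(L:ℝ)) (L:ℝ)) isCompact_Icc A in_s equi
  obtain ⟨g, hgA, φ, hφ, hconv⟩ :=
    hcomp.tendsto_subseq (x := F) (fun n => subset_closure (Set.mem_range_self n))
  refine ⟨⇑g, g.continuous, ?_⟩
  intro θ
  have heval : ∀ ϑ : UnitAddCircle,
      Filter.Tendsto (fun n => F (φ n) ϑ) Filter.atTop (nhds (g ϑ)) := by
    intro ϑ
    exact ((continuous_eval_const ϑ).tendsto g).comp hconv
  have hp : Filter.Tendsto (fun n => ((ps (φ n) : ℝ))) Filter.atTop (nhds (p : ℝ)) :=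
    ((continuous_subtype_val.tendsto p).comp hlim).comp hφ.tendsto_atTop
  have hlim2 : Filter.Tendsto
      (fun n => F (φ n) ((ℓ:ℤ) • θ) - (ps (φ n) : ℝ) * F (φ n) θ) Filter.atTop
      (nhds (g ((ℓ:ℤ) • θ) - (p : ℝ) * g θ)) :=
    (heval _).sub (hp.mul (heval θ))
  have hconst : ∀ n, F (φ n) ((ℓ:ℤ) • θ) - (ps (φ n) : ℝ) * F (φ n) θ = τ θ := by
    intro n
    have : ∀ ϑ, F (φ n) ϑ = ν (φ n) ϑ := fun ϑ => rfl
    rw [this, this]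
    exact hνsol (φ n) θ
  rw [show (fun n => F (φ n) ((ℓ:ℤ) • θ) - (ps (φ n) : ℝ) * F (φ n) θ) = fun _ => τ θ
    from funext hconst] at hlim2
  exact (tendsto_nhds_unique tendsto_const_nhds hlim2).symm
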